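/- Let m ∈ ℕ and let N be an ℝ^m-valued random vector whose law is absolutely continuous with respect to Lebesgue measure. Let (ξ_ε)_{ε∈(0,1)} be real-valued random variables, each independent of N, converging in distribution as ε → 0⁺ to a random variable ξ₀. Let (Φ_ε)_{ε∈(0,1)} be continuous functions ℝ × ℝ^m → ℝ converging locally uniformly, as ε → 0⁺, to a continuous function Φ such that for law(ξ₀)-almost every x ∈ ℝ the set {y ∈ ℝ^m : Φ(x,y) = 0} has Lebesgue measure zero. Then for every δ′ > 0, lim_{ε→0⁺} P( |Φ_ε(ξ_ε, N)| ≤ ε^{δ′} ) = 0. -/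

import Mathlib

open MeasureTheory Filter
open scoped ENNReal NNReal Topology

section Aux

noncomputable def clamp (r t : ℝ) : ℝ := max 0 (min 1 (2 - t / r))

lemma clamp_nonneg (r t : ℝ) : 0 ≤ clamp r t := le_max_left _ _

lemma clamp_le_one (r t : ℝ) : clamp r t ≤ 1 :=
  max_le zero_le_one (min_le_left _ _)

lemma clamp_eq_one {r t : ℝ} (hr : 0 < r) (ht : t ≤ r) : clamp r t = 1 := by
  have h1 : t / r ≤ 1 := (div_le_one hr).2 ht
  have : (1:ℝ) ≤ 2 - t / r := by linarith
  rw [clamp, min_eq_left this, max_eq_right (zero_le_one (α := ℝ))]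

lemma clamp_eq_zero {r t : ℝ} (hr : 0 < r) (ht : 2 * r ≤ t) : clamp r t = 0 := by
  have h1 : (2:ℝ) ≤ t / r := (le_div_iff₀ hr).2 (by linarith)
  have h2 : min 1 (2 - t / r) ≤ 0 := le_trans (min_le_right _ _) (by linarith)
  exact max_eq_left h2

lemma clamp_zero_right {r : ℝ} : clamp r 0 = 1 := by
  rw [clamp]
  norm_num

lemma clamp_continuous {α : Type*} [TopologicalSpace α] {f : α → ℝ} (hf : Continuous f)
    (r : ℝ) : Continuous fun a => clamp r (f a) := by
  unfold clamp
  fun_prop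

lemma clamp_tendsto_of_pos {t : ℝ} (ht : 0 < t) :
    Tendsto (fun n : ℕ => clamp (1 / (n + 1)) t) atTop (𝓝 0) := by
  have : ∀ᶠ n : ℕ in atTop, clamp (1 / (n + 1)) t = 0 := by
    filter_upwards [eventually_ge_atTop ⌈2 / t⌉₊] with n hn
    apply clamp_eq_zero (by positivity)
    rw [show (2:ℝ) * (1 / (n + 1)) = 2 / (n + 1) by ring]
    rw [div_le_iff₀ (by positivity), mul_comm]
    have h1 : (2 / t : ℝ) ≤ n + 1 := by
      calc (2 / t : ℝ) ≤ ⌈2 / t⌉₊ := Nat.le_ceil _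
      _ ≤ n + 1 := by exact_mod_cast Nat.le_succ_of_le hn
    calc (2:ℝ) = (2 / t) * t := by field_simp
    _ ≤ (n + 1) * t := by nlinarith
  exact Tendsto.congr' (this.mono fun n h => h.symm) tendsto_const_nhds

/-- bounded continuous function clamping `f` into `[0,1]`. -/
noncomputable def bcf01 {X : Type*} [TopologicalSpace X] (f : X → ℝ) (hf : Continuous f) :
    BoundedContinuousFunction X ℝ :=
  BoundedContinuousFunction.ofNormedAddCommGroup (fun x => max 0 (min 1 (f x)))
    (by fun_prop) 1 (fun x => by
      rw [Real.norm_eq_abs, abs_of_nonneg (le_max_left _ _)]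
      exact max_le zero_le_one (min_le_left _ _))

lemma bcf01_apply {X : Type*} [TopologicalSpace X] (f : X → ℝ) (hf : Continuous f) (x : X) :
    bcf01 f hf x = max 0 (min 1 (f x)) := rfl

lemma bcf01_nonneg {X : Type*} [TopologicalSpace X] (f : X → ℝ) (hf : Continuous f) (x : X) :
    0 ≤ bcf01 f hf x := le_max_left _ _

lemma bcf01_le_one {X : Type*} [TopologicalSpace X] (f : X → ℝ) (hf : Continuous f) (x : X) :
    bcf01 f hf x ≤ 1 := max_le zero_le_one (min_le_left _ _)

lemma bcf01_eq_one {X : Type*} [TopologicalSpace X] (f : X → ℝ) (hf : Continuous f) {x : X}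
    (h : 1 ≤ f x) : bcf01 f hf x = 1 := by
  rw [bcf01_apply, min_eq_left h, max_eq_right (zero_le_one (α := ℝ))]

lemma bcf01_eq_zero {X : Type*} [TopologicalSpace X] (f : X → ℝ) (hf : Continuous f) {x : X}
    (h : f x ≤ 0) : bcf01 f hf x = 0 := by
  rw [bcf01_apply, max_eq_left (le_trans (min_le_right _ _) h)]

lemma integrable_of_bounded01 {α : Type*} [MeasurableSpace α] (μ : Measure α) [IsFiniteMeasure μ]
    {h : α → ℝ} (hm : AEStronglyMeasurable h μ) (h0 : ∀ a, 0 ≤ h a) (h1 : ∀ a, h a ≤ 1) :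
    Integrable h μ :=
  (integrable_const 1).mono' hm (ae_of_all _ fun a => by
    rw [Real.norm_eq_abs, abs_of_nonneg (h0 a)]; exact h1 a)

lemma meas_le_integral {α : Type*} [MeasurableSpace α] (μ : Measure α) [IsFiniteMeasure μ]
    {A : Set α} (hA : MeasurableSet A) {h : α → ℝ} (hint : Integrable h μ)
    (h0 : ∀ a, 0 ≤ h a) (h1 : ∀ a ∈ A, 1 ≤ h a) : (μ A).toReal ≤ ∫ a, h a ∂μ := by
  have h2 : (μ A).toReal = ∫ a in A, (1:ℝ) ∂μ := by simp [setIntegral_const, Measure.real]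
  rw [h2]
  calc ∫ _ in A, (1:ℝ) ∂μ ≤ ∫ a in A, h a ∂μ :=
        setIntegral_mono_on (integrable_const 1).integrableOn hint.integrableOn hA h1
  _ ≤ ∫ a, h a ∂μ := setIntegral_le_integral hint (ae_of_all _ h0)

lemma compl_le_of_ofReal_le {α : Type*} [MeasurableSpace α] (μ : Measure α)
    [IsProbabilityMeasure μ] {A : Set α} (hA : MeasurableSet A) {c : ℝ} (hc : 0 ≤ c) (hc1 : c ≤ 1)
    (h : ENNReal.ofReal (1 - c) ≤ μ A) : μ Aᶜ ≤ ENNReal.ofReal c := by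
  rw [prob_compl_eq_one_sub hA, tsub_le_iff_right]
  calc (1:ℝ≥0∞) = ENNReal.ofReal (c + (1 - c)) := by norm_num
  _ = ENNReal.ofReal c + ENNReal.ofReal (1-c) := ENNReal.ofReal_add hc (by linarith)
  _ ≤ ENNReal.ofReal c + μ A := by gcongr

lemma compl_le_of_le_toReal {α : Type*} [MeasurableSpace α] (μ : Measure α)
    [IsProbabilityMeasure μ] {A : Set α} (hA : MeasurableSet A) {c : ℝ} (hc : 0 ≤ c) (hc1 : c ≤ 1)
    (h : 1 - c ≤ (μ A).toReal) : μ Aᶜ ≤ ENNReal.ofReal c := by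
  apply compl_le_of_ofReal_le μ hA hc hc1
  calc ENNReal.ofReal (1 - c) ≤ ENNReal.ofReal (μ A).toReal := ENNReal.ofReal_le_ofReal h
  _ = μ A := ENNReal.ofReal_toReal (measure_ne_top _ _)

end Aux

theorem stmt17 {Ω : Type*} [MeasurableSpace Ω] (P : Measure Ω) [IsProbabilityMeasure P]
    (m : ℕ) (N : Ω → (Fin m → ℝ)) (hN : Measurable N)
    (hNac : P.map N ≪ (volume : Measure (Fin m → ℝ)))
    (ξ : ℝ → Ω → ℝ) (hξm : ∀ ε ∈ Set.Ioo (0:ℝ) 1, Measurable (ξ ε))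
    (hξind : ∀ ε ∈ Set.Ioo (0:ℝ) 1, ProbabilityTheory.IndepFun (ξ ε) N P)
    (ξ₀ : Ω → ℝ) (hξ₀ : Measurable ξ₀)
    (hconv : ∀ f : BoundedContinuousFunction ℝ ℝ,
      Tendsto (fun ε => ∫ ω, f (ξ ε ω) ∂P) (nhdsWithin (0:ℝ) (Set.Ioi 0))
        (nhds (∫ ω, f (ξ₀ ω) ∂P)))
    (Φ : ℝ → ℝ → (Fin m → ℝ) → ℝ) (Φ₀ : ℝ → (Fin m → ℝ) → ℝ)
    (hΦc : ∀ ε ∈ Set.Ioo (0:ℝ) 1, Continuous (fun q : ℝ × (Fin m → ℝ) => Φ ε q.1 q.2))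
    (hΦ₀c : Continuous (fun q : ℝ × (Fin m → ℝ) => Φ₀ q.1 q.2))
    (hLU : TendstoLocallyUniformly (fun ε (q : ℝ × (Fin m → ℝ)) => Φ ε q.1 q.2)
      (fun q => Φ₀ q.1 q.2) (nhdsWithin (0:ℝ) (Set.Ioi 0)))
    (hzero : ∀ᵐ x ∂(P.map ξ₀), volume {y : Fin m → ℝ | Φ₀ x y = 0} = 0) :
    ∀ δ : ℝ, 0 < δ →
      Tendsto (fun ε => P {ω | |Φ ε (ξ ε ω) (N ω)| ≤ ε ^ δ})
        (nhdsWithin (0:ℝ) (Set.Ioi 0)) (nhds 0) := by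
  intro δ hδ
  set ν := P.map N with hνdef
  have hνprob : IsProbabilityMeasure ν := Measure.isProbabilityMeasure_map hN.aemeasurable
  set μ₀ := P.map ξ₀ with hμ₀def
  have hμ₀prob : IsProbabilityMeasure μ₀ := Measure.isProbabilityMeasure_map hξ₀.aemeasurable
  rw [ENNReal.tendsto_nhds_zero]
  intro η hη
  obtain ⟨γ, hγ0, hγ1, hγη⟩ : ∃ γ : ℝ, 0 < γ ∧ γ ≤ 1/2 ∧ ENNReal.ofReal γ ≤ η := by
    rcases eq_or_ne η ∞ with h | h
    · exact ⟨1/2, by norm_num, le_refl _, by simp [h]⟩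
    · refine ⟨min (1/2) η.toReal, lt_min (by norm_num) (ENNReal.toReal_pos hη.ne' h), min_le_left _ _, ?_⟩
      calc ENNReal.ofReal (min (1/2) η.toReal) ≤ ENNReal.ofReal η.toReal :=
            ENNReal.ofReal_le_ofReal (min_le_right _ _)
      _ = η := ENNReal.ofReal_toReal h
  suffices H : ∀ᶠ ε in nhdsWithin (0:ℝ) (Set.Ioi 0),
      P {ω | |Φ ε (ξ ε ω) (N ω)| ≤ ε ^ δ} ≤ ENNReal.ofReal γ by
    filter_upwards [H] with ε hε
    exact hε.trans hγη
  -- Step A : tightness of the family ξ ε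
  set fM : ℕ → BoundedContinuousFunction ℝ ℝ :=
    fun M => bcf01 (fun x => (M:ℝ) + 1 - |x|) (by fun_prop) with hfMdef
  obtain ⟨M, hM⟩ : ∃ M : ℕ, 1 - γ/8 < ∫ ω, fM M (ξ₀ ω) ∂P := by
    have hlim : Tendsto (fun M : ℕ => ∫ ω, fM M (ξ₀ ω) ∂P) atTop (𝓝 (∫ _ω, (1:ℝ) ∂P)) := by
      apply tendsto_integral_of_dominated_convergence (fun _ => (1:ℝ))
      · intro n
        exact ((fM n).continuous.measurable.comp hξ₀).aestronglyMeasurable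
      · exact integrable_const 1
      · intro n
        refine ae_of_all _ fun ω => ?_
        rw [Real.norm_eq_abs, abs_of_nonneg (bcf01_nonneg _ _ _)]
        exact bcf01_le_one _ _ _
      · refine ae_of_all _ fun ω => ?_
        have : ∀ᶠ n : ℕ in atTop, fM n (ξ₀ ω) = 1 := by
          filter_upwards [eventually_ge_atTop ⌈|ξ₀ ω|⌉₊] with n hn
          apply bcf01_eq_one
          have : |ξ₀ ω| ≤ n := le_trans (Nat.le_ceil _) (by exact_mod_cast hn)
          linarith
        exact Tendsto.congr' (this.mono fun n h => h.symm) tendsto_const_nhds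
    rw [integral_const, probReal_univ] at hlim
    simp only [ENNReal.toReal_one, one_smul] at hlim
    exact (hlim.eventually (eventually_gt_nhds (by linarith))).exists
  have hξKev : ∀ᶠ ε in nhdsWithin (0:ℝ) (Set.Ioi 0),
      1 - γ/4 < ∫ ω, fM M (ξ ε ω) ∂P :=
    (hconv (fM M)).eventually (eventually_gt_nhds (by linarith))
  set K : Set ℝ := Set.Icc (-((M:ℝ)+1)) ((M:ℝ)+1) with hKdef
  have hKcomp : IsCompact K := isCompact_Icc
  -- Step B : tightness of N
  obtain ⟨n, hnL⟩ : ∃ n : ℕ,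
      ENNReal.ofReal (1 - γ/4) ≤ ν (Metric.closedBall (0 : Fin m → ℝ) n) := by
    have hU : ⋃ n : ℕ, Metric.closedBall (0 : Fin m → ℝ) n = Set.univ := by
      ext y
      simp only [Set.mem_iUnion, Metric.mem_closedBall, Set.mem_univ, iff_true]
      exact ⟨⌈dist y 0⌉₊, Nat.le_ceil _⟩
    have hlim : Tendsto (fun n : ℕ => ν (Metric.closedBall (0 : Fin m → ℝ) n)) atTop
        (𝓝 (ν (⋃ n : ℕ, Metric.closedBall (0 : Fin m → ℝ) n))) :=
      tendsto_measure_iUnion_atTop (fun a b hab =>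
        Metric.closedBall_subset_closedBall (by exact_mod_cast hab))
    rw [hU, measure_univ] at hlim
    have hlt : ENNReal.ofReal (1 - γ/4) < 1 := by
      rw [show (1:ℝ≥0∞) = ENNReal.ofReal 1 by simp]
      exact ENNReal.ofReal_lt_ofReal_iff_of_nonneg (by linarith) |>.2 (by linarith)
    exact ((hlim.eventually (eventually_gt_nhds hlt)).exists).imp fun n h => h.le
  set L : Set (Fin m → ℝ) := Metric.closedBall 0 n with hLdef
  have hLcomp : IsCompact L := isCompact_closedBall _ _
  have hLmeas : MeasurableSet L := Metric.isClosed_closedBall.measurableSet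
  have hP2 : P {ω | N ω ∉ L} ≤ ENNReal.ofReal (γ/4) := by
    have : P {ω | N ω ∉ L} = ν Lᶜ := by
      rw [hνdef, Measure.map_apply hN hLmeas.compl]
      rfl
    rw [this]
    exact compl_le_of_ofReal_le ν hLmeas (by linarith) (by linarith) hnL
  -- Step C : choice of r via dominated convergence
  have hSmeas : ∀ x : ℝ, MeasurableSet {y : Fin m → ℝ | Φ₀ x y = 0} := by
    intro x
    have : Continuous fun y : Fin m → ℝ => Φ₀ x y := hΦ₀c.comp (Continuous.prodMk_right x)
    exact (isClosed_eq this continuous_const).measurableSet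
  have hSsect : ∀ᵐ x ∂μ₀, ν {y : Fin m → ℝ | Φ₀ x y = 0} = 0 :=
    hzero.mono fun x hx => hNac hx
  have hΦ₀y : ∀ x : ℝ, Continuous fun y : Fin m → ℝ => Φ₀ x y :=
    fun x => hΦ₀c.comp (Continuous.prodMk_right x)
  have hclampmeas : ∀ (r : ℝ) (x : ℝ),
      AEStronglyMeasurable (fun y : Fin m → ℝ => clamp r |Φ₀ x y|) ν :=
    fun r x => (clamp_continuous (hΦ₀y x).abs r).aestronglyMeasurable
  set g : ℕ → ℝ → ℝ := fun k x => ∫ y, clamp (1/(k+1)) |Φ₀ x y| ∂ν with hgdef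
  have hgcont : ∀ k : ℕ, Continuous (g k) := by
    intro k
    apply continuous_of_dominated (bound := fun _ => (1:ℝ))
    · exact fun x => hclampmeas _ x
    · intro x
      refine ae_of_all _ fun y => ?_
      rw [Real.norm_eq_abs, abs_of_nonneg (clamp_nonneg _ _)]
      exact clamp_le_one _ _
    · exact integrable_const 1
    · refine ae_of_all _ fun y => ?_
      exact clamp_continuous ((hΦ₀c.comp (Continuous.prodMk_left y))).abs _
  have houter : Tendsto (fun k => ∫ x, g k x ∂μ₀) atTop (𝓝 (∫ _x, (0:ℝ) ∂μ₀)) := by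
    apply tendsto_integral_of_dominated_convergence (fun _ => (1:ℝ))
    · exact fun k => (hgcont k).aestronglyMeasurable
    · exact integrable_const 1
    · intro k
      refine ae_of_all _ fun x => ?_
      rw [Real.norm_eq_abs, abs_le]
      constructor
      · have : (0:ℝ) ≤ g k x :=
          integral_nonneg fun y => clamp_nonneg _ _
        linarith
      · calc g k x ≤ ∫ _y, (1:ℝ) ∂ν :=
              integral_mono (integrable_of_bounded01 ν (hclampmeas _ x)
                  (fun y => clamp_nonneg _ _) (fun y => clamp_le_one _ _))
                (integrable_const 1) (fun y => clamp_le_one _ _)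
        _ = 1 := by simp
    · filter_upwards [hSsect] with x hx
      have hlim0 : Tendsto (fun k => g k x)
          atTop (𝓝 (∫ y, Set.indicator {y : Fin m → ℝ | Φ₀ x y = 0} (fun _ => (1:ℝ)) y ∂ν)) := by
        apply tendsto_integral_of_dominated_convergence (fun _ => (1:ℝ))
        · exact fun k => hclampmeas _ x
        · exact integrable_const 1
        · intro k
          refine ae_of_all _ fun y => ?_
          rw [Real.norm_eq_abs, abs_of_nonneg (clamp_nonneg _ _)]
          exact clamp_le_one _ _
        · refine ae_of_all _ fun y => ?_
          by_cases h0 : Φ₀ x y = 0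
          · have : ∀ k : ℕ, clamp (1/((k:ℝ)+1)) |Φ₀ x y| = 1 := by
              intro k
              rw [h0, abs_zero, clamp_zero_right]
            rw [Set.indicator_of_mem (show y ∈ {y | Φ₀ x y = 0} from h0)]
            simp only [this]
            exact tendsto_const_nhds
          · rw [Set.indicator_of_notMem (show y ∉ {y | Φ₀ x y = 0} from h0)]
            exact clamp_tendsto_of_pos (abs_pos.2 h0)
      have hz : ∫ y, Set.indicator {y : Fin m → ℝ | Φ₀ x y = 0} (fun _ => (1:ℝ)) y ∂ν = 0 := by
        rw [integral_indicator_const _ (hSmeas x), Measure.real, hx]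
        simp
      rwa [hz] at hlim0
  rw [integral_zero] at houter
  obtain ⟨k₀, hk₀⟩ : ∃ k : ℕ, ∫ x, g k x ∂μ₀ < γ/8 :=
    (houter.eventually (eventually_lt_nhds (by positivity))).exists
  set r : ℝ := 1/((k₀:ℝ)+1) with hrdef
  have hr : 0 < r := by positivity
  -- the bounded continuous function F
  set F : BoundedContinuousFunction ℝ ℝ :=
    BoundedContinuousFunction.ofNormedAddCommGroup (g k₀) (hgcont k₀) 1 (fun x => by
      calc ‖g k₀ x‖ ≤ 1 * (ν Set.univ).toReal := by
            apply norm_integral_le_of_norm_le_const (C := 1)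
            refine ae_of_all _ fun y => ?_
            rw [Real.norm_eq_abs, abs_of_nonneg (clamp_nonneg _ _)]
            exact clamp_le_one _ _
      _ = 1 := by simp) with hFdef
  have hFapply : ∀ x, F x = ∫ y, clamp r |Φ₀ x y| ∂ν := fun x => rfl
  have hFint : ∫ ω, F (ξ₀ ω) ∂P < γ/8 := by
    have : ∫ ω, F (ξ₀ ω) ∂P = ∫ x, F x ∂μ₀ :=
      (integral_map hξ₀.aemeasurable F.continuous.aestronglyMeasurable).symm
    rw [this]
    exact hk₀
  have hFev : ∀ᶠ ε in nhdsWithin (0:ℝ) (Set.Ioi 0), ∫ ω, F (ξ ε ω) ∂P < γ/4 :=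
    (hconv F).eventually (eventually_lt_nhds (by linarith))
  -- Step G : locally uniform convergence on the compact K ×ˢ L
  have hKL : IsCompact (K ×ˢ L) := hKcomp.prod hLcomp
  have hLU' := (tendstoLocallyUniformly_iff_forall_isCompact.1 hLU) (K ×ˢ L) hKL
  rw [Metric.tendstoUniformlyOn_iff] at hLU'
  have hG : ∀ᶠ ε in nhdsWithin (0:ℝ) (Set.Ioi 0),
      ∀ q ∈ K ×ˢ L, dist (Φ₀ q.1 q.2) (Φ ε q.1 q.2) < r/2 := hLU' (r/2) (by positivity)
  -- Step H : ε ^ δ small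
  have hpow0 : Tendsto (fun ε : ℝ => ε ^ δ) (nhdsWithin (0:ℝ) (Set.Ioi 0)) (𝓝 0) := by
    have h := (Real.continuousAt_rpow_const 0 δ (Or.inr hδ.le)).tendsto
    rw [Real.zero_rpow hδ.ne'] at h
    exact h.mono_left nhdsWithin_le_nhds
  have hpow : ∀ᶠ ε in nhdsWithin (0:ℝ) (Set.Ioi 0), ε ^ δ < r/2 :=
    hpow0.eventually (eventually_lt_nhds (by positivity))
  have hIoo : ∀ᶠ ε in nhdsWithin (0:ℝ) (Set.Ioi 0), ε ∈ Set.Ioo (0:ℝ) 1 := by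
    have h1 : ∀ᶠ ε in nhdsWithin (0:ℝ) (Set.Ioi 0), ε ∈ Set.Ioi (0:ℝ) :=
      eventually_mem_nhdsWithin
    have h2 : ∀ᶠ ε in nhdsWithin (0:ℝ) (Set.Ioi 0), ε < 1 :=
      eventually_nhdsWithin_of_eventually_nhds (eventually_lt_nhds one_pos)
    filter_upwards [h1, h2] with ε hε1 hε2
    exact ⟨hε1, hε2⟩
  -- Final combination
  filter_upwards [hIoo, hξKev, hFev, hG, hpow] with ε hε hKe hFε hGε hpε
  -- P1 : the ξ ε tail
  have hAmeas : MeasurableSet {ω | ξ ε ω ∈ K} := (hξm ε hε) measurableSet_Icc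
  have hP1 : P {ω | ξ ε ω ∉ K} ≤ ENNReal.ofReal (γ/4) := by
    have hle : ∫ ω, fM M (ξ ε ω) ∂P ≤ (P {ω | ξ ε ω ∈ K}).toReal := by
      have hbd : ∀ ω, fM M (ξ ε ω) ≤
          Set.indicator {ω | ξ ε ω ∈ K} (fun _ => (1:ℝ)) ω := by
        intro ω
        by_cases hω : ξ ε ω ∈ K
        · rw [Set.indicator_of_mem (show ω ∈ {ω | ξ ε ω ∈ K} from hω)]
          exact bcf01_le_one _ _ _
        · rw [Set.indicator_of_notMem (show ω ∉ {ω | ξ ε ω ∈ K} from hω)]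
          have : ¬ |ξ ε ω| ≤ (M:ℝ)+1 := by
            rw [abs_le]
            simpa [hKdef, Set.mem_Icc] using hω
          have h2 : (M:ℝ) + 1 - |ξ ε ω| ≤ 0 := by
            push_neg at this
            linarith
          exact le_of_eq (bcf01_eq_zero _ _ h2)
      calc ∫ ω, fM M (ξ ε ω) ∂P
          ≤ ∫ ω, Set.indicator {ω | ξ ε ω ∈ K} (fun _ => (1:ℝ)) ω ∂P :=
            integral_mono
              (integrable_of_bounded01 P
                (((fM M).continuous.measurable.comp (hξm ε hε)).aestronglyMeasurable)
                (fun ω => bcf01_nonneg _ _ _) (fun ω => bcf01_le_one _ _ _))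
              ((integrable_const (1:ℝ)).indicator hAmeas) hbd
      _ = (P {ω | ξ ε ω ∈ K}).toReal := by
            rw [integral_indicator_const _ hAmeas]; simp [Measure.real]
    have : {ω | ξ ε ω ∉ K} = {ω | ξ ε ω ∈ K}ᶜ := rfl
    rw [this]
    exact compl_le_of_le_toReal P hAmeas (by linarith) (by linarith) (by linarith)
  -- P3 : the Φ₀ event
  have hTmeas : Measurable (fun ω => ((ξ ε ω, N ω) : ℝ × (Fin m → ℝ))) :=
    (hξm ε hε).prodMk hN
  have hCmeas : MeasurableSet {ω | |Φ₀ (ξ ε ω) (N ω)| ≤ r} := by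
    have hcl : IsClosed {q : ℝ × (Fin m → ℝ) | |Φ₀ q.1 q.2| ≤ r} :=
      isClosed_le hΦ₀c.abs continuous_const
    exact hTmeas hcl.measurableSet
  have hP3 : P {ω | |Φ₀ (ξ ε ω) (N ω)| ≤ r} ≤ ENNReal.ofReal (γ/4) := by
    have hclampcont : Continuous fun q : ℝ × (Fin m → ℝ) => clamp r |Φ₀ q.1 q.2| :=
      clamp_continuous hΦ₀c.abs r
    have hHint : Integrable (fun ω => clamp r |Φ₀ (ξ ε ω) (N ω)|) P :=
      integrable_of_bounded01 P
        ((hclampcont.measurable.comp hTmeas).aestronglyMeasurable)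
        (fun ω => clamp_nonneg _ _) (fun ω => clamp_le_one _ _)
    have hle1 : (P {ω | |Φ₀ (ξ ε ω) (N ω)| ≤ r}).toReal ≤
        ∫ ω, clamp r |Φ₀ (ξ ε ω) (N ω)| ∂P := by
      apply meas_le_integral P hCmeas hHint (fun ω => clamp_nonneg _ _)
      intro ω hω
      exact le_of_eq (clamp_eq_one hr hω).symm
    have hprodint : Integrable (fun q : ℝ × (Fin m → ℝ) => clamp r |Φ₀ q.1 q.2|)
        ((P.map (ξ ε)).prod ν) := by
      have : IsProbabilityMeasure (P.map (ξ ε)) :=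
        Measure.isProbabilityMeasure_map (hξm ε hε).aemeasurable
      exact integrable_of_bounded01 _ hclampcont.aestronglyMeasurable
        (fun q => clamp_nonneg _ _) (fun q => clamp_le_one _ _)
    have heq : ∫ ω, clamp r |Φ₀ (ξ ε ω) (N ω)| ∂P = ∫ ω, F (ξ ε ω) ∂P := by
      calc ∫ ω, clamp r |Φ₀ (ξ ε ω) (N ω)| ∂P
          = ∫ q, clamp r |Φ₀ q.1 q.2| ∂(P.map (fun ω => ((ξ ε ω, N ω) : ℝ × (Fin m → ℝ)))) :=
            (integral_map hTmeas.aemeasurable (by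
              rw [(ProbabilityTheory.indepFun_iff_map_prod_eq_prod_map_map
                (hξm ε hε).aemeasurable hN.aemeasurable).1 (hξind ε hε)]
              exact hclampcont.aestronglyMeasurable)).symm
      _ = ∫ q, clamp r |Φ₀ q.1 q.2| ∂((P.map (ξ ε)).prod ν) := by
            rw [(ProbabilityTheory.indepFun_iff_map_prod_eq_prod_map_map
              (hξm ε hε).aemeasurable hN.aemeasurable).1 (hξind ε hε)]
      _ = ∫ x, ∫ y, clamp r |Φ₀ x y| ∂ν ∂(P.map (ξ ε)) := integral_prod _ hprodint
      _ = ∫ x, F x ∂(P.map (ξ ε)) := by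
            refine integral_congr_ae (ae_of_all _ fun x => ?_)
            rw [hFapply]
      _ = ∫ ω, F (ξ ε ω) ∂P :=
            integral_map (hξm ε hε).aemeasurable F.continuous.aestronglyMeasurable
    have htr : (P {ω | |Φ₀ (ξ ε ω) (N ω)| ≤ r}).toReal ≤ γ/4 := by
      rw [heq] at hle1
      linarith
    calc P {ω | |Φ₀ (ξ ε ω) (N ω)| ≤ r}
        = ENNReal.ofReal ((P {ω | |Φ₀ (ξ ε ω) (N ω)| ≤ r}).toReal) :=
          (ENNReal.ofReal_toReal (measure_ne_top _ _)).symm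
    _ ≤ ENNReal.ofReal (γ/4) := ENNReal.ofReal_le_ofReal htr
  -- inclusion of events
  have hsub : {ω | |Φ ε (ξ ε ω) (N ω)| ≤ ε ^ δ} ⊆
      ({ω | ξ ε ω ∉ K} ∪ {ω | N ω ∉ L}) ∪ {ω | |Φ₀ (ξ ε ω) (N ω)| ≤ r} := by
    intro ω hω
    by_cases h1 : ξ ε ω ∈ K
    · by_cases h2 : N ω ∈ L
      · right
        have hq : ((ξ ε ω, N ω) : ℝ × (Fin m → ℝ)) ∈ K ×ˢ L := ⟨h1, h2⟩
        have hd := hGε _ hq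
        rw [Real.dist_eq] at hd
        have hω' : |Φ ε (ξ ε ω) (N ω)| ≤ ε ^ δ := hω
        have : |Φ₀ (ξ ε ω) (N ω)| ≤ r := by
          calc |Φ₀ (ξ ε ω) (N ω)|
              ≤ |Φ ε (ξ ε ω) (N ω)| + |Φ₀ (ξ ε ω) (N ω) - Φ ε (ξ ε ω) (N ω)| := by
                have := abs_sub_abs_le_abs_sub (Φ₀ (ξ ε ω) (N ω)) (Φ ε (ξ ε ω) (N ω))
                linarith [abs_nonneg (Φ₀ (ξ ε ω) (N ω) - Φ ε (ξ ε ω) (N ω))]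
          _ ≤ ε ^ δ + r/2 := add_le_add hω' hd.le
          _ ≤ r := by linarith
        exact this
      · exact Or.inl (Or.inr h2)
    · exact Or.inl (Or.inl h1)
  calc P {ω | |Φ ε (ξ ε ω) (N ω)| ≤ ε ^ δ}
      ≤ P (({ω | ξ ε ω ∉ K} ∪ {ω | N ω ∉ L}) ∪ {ω | |Φ₀ (ξ ε ω) (N ω)| ≤ r}) :=
        measure_mono hsub
  _ ≤ P ({ω | ξ ε ω ∉ K} ∪ {ω | N ω ∉ L}) + P {ω | |Φ₀ (ξ ε ω) (N ω)| ≤ r} :=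
        measure_union_le _ _
  _ ≤ (P {ω | ξ ε ω ∉ K} + P {ω | N ω ∉ L}) + P {ω | |Φ₀ (ξ ε ω) (N ω)| ≤ r} := by
        gcongr
        exact measure_union_le _ _
  _ ≤ (ENNReal.ofReal (γ/4) + ENNReal.ofReal (γ/4)) + ENNReal.ofReal (γ/4) := by
        gcongr
  _ ≤ ENNReal.ofReal γ := by
        rw [← ENNReal.ofReal_add (by linarith) (by linarith),
          ← ENNReal.ofReal_add (by linarith) (by linarith)]
        exact ENNReal.ofReal_le_ofReal (by linarith)
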